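/- For a permutation schedule of jobs J_1,...,J_n on a three-machine flow shop with jobs started as early as possible, the makespan equals max over pairs 1 ≤ u ≤ v ≤ n of ( sum_{j=1}^{u} p_{1j} + sum_{j=u}^{v} p_{2j} + sum_{j=v}^{n} p_{3j} ). -/
import Mathlib

open Finset

private lemma sum_pt {n : ℕ} (q : Fin n → ℝ) (u : Fin n) :
    ∑ k ∈ Finset.univ.filter (fun k => u ≤ k ∧ k ≤ u), q k = q u := by
  have h : Finset.univ.filter (fun k => u ≤ k ∧ k ≤ u) = {u} := by
    ext k
    simp only [mem_filter, mem_univ, true_and, mem_singleton, Fin.le_def, Fin.ext_iff]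
    omega
  rw [h, sum_singleton]

private lemma sum_split {n : ℕ} (q : Fin n → ℝ) (m : ℕ) (h : m + 1 < n) (u : Fin n)
    (hu : (u : ℕ) ≤ m) :
    ∑ k ∈ Finset.univ.filter (fun k => u ≤ k ∧ k ≤ (⟨m + 1, h⟩ : Fin n)), q k
      = (∑ k ∈ Finset.univ.filter
          (fun k => u ≤ k ∧ k ≤ (⟨m, Nat.lt_of_succ_lt h⟩ : Fin n)), q k) + q ⟨m + 1, h⟩ := by
  have hs : Finset.univ.filter (fun k => u ≤ k ∧ k ≤ (⟨m + 1, h⟩ : Fin n))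
      = insert (⟨m + 1, h⟩ : Fin n)
        (Finset.univ.filter (fun k => u ≤ k ∧ k ≤ (⟨m, Nat.lt_of_succ_lt h⟩ : Fin n))) := by
    ext k
    simp only [mem_insert, mem_filter, mem_univ, true_and, Fin.le_def, Fin.ext_iff]
    omega
  rw [hs, sum_insert (by
    simp only [mem_filter, mem_univ, true_and, Fin.le_def, not_and]
    omega)]
  ring

theorem three_machine_permutation_makespan
    (n : ℕ) (hn : 0 < n) (p1 p2 p3 : Fin n → ℝ)
    (hp1 : ∀ j, 0 ≤ p1 j) (hp2 : ∀ j, 0 ≤ p2 j) (hp3 : ∀ j, 0 ≤ p3 j)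
    (C1 C2 C3 : Fin n → ℝ)
    -- machine 1 processes the jobs back to back starting at time 0
    (hC1 : ∀ j : Fin n, C1 j = ∑ k ∈ Finset.univ.filter (fun k => k ≤ j), p1 k)
    -- earliest-start recursion on machine 2
    (hC2zero : C2 ⟨0, hn⟩ = C1 ⟨0, hn⟩ + p2 ⟨0, hn⟩)
    (hC2succ : ∀ (j : Fin n) (h : (j : ℕ) + 1 < n),
      C2 ⟨(j : ℕ) + 1, h⟩ = max (C1 ⟨(j : ℕ) + 1, h⟩) (C2 j) + p2 ⟨(j : ℕ) + 1, h⟩)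
    -- earliest-start recursion on machine 3
    (hC3zero : C3 ⟨0, hn⟩ = C2 ⟨0, hn⟩ + p3 ⟨0, hn⟩)
    (hC3succ : ∀ (j : Fin n) (h : (j : ℕ) + 1 < n),
      C3 ⟨(j : ℕ) + 1, h⟩ = max (C2 ⟨(j : ℕ) + 1, h⟩) (C3 j) + p3 ⟨(j : ℕ) + 1, h⟩) :
    C3 ⟨n - 1, Nat.sub_lt hn Nat.one_pos⟩ =
      (Finset.univ.filter (fun uv : Fin n × Fin n => uv.1 ≤ uv.2)).sup'
        ⟨(⟨0, hn⟩, ⟨0, hn⟩), by simp⟩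
        (fun uv =>
          (∑ j ∈ Finset.univ.filter (fun j => j ≤ uv.1), p1 j) +
          (∑ j ∈ Finset.univ.filter (fun j => uv.1 ≤ j ∧ j ≤ uv.2), p2 j) +
          (∑ j ∈ Finset.univ.filter (fun j => uv.2 ≤ j), p3 j)) := by
  set A : Fin n → ℝ := fun u => ∑ k ∈ Finset.univ.filter (fun k => k ≤ u), p1 k with hA
  set S2 : Fin n → Fin n → ℝ :=
    fun u v => ∑ k ∈ Finset.univ.filter (fun k => u ≤ k ∧ k ≤ v), p2 k with hS2
  set S3 : Fin n → Fin n → ℝ :=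
    fun v j => ∑ k ∈ Finset.univ.filter (fun k => v ≤ k ∧ k ≤ j), p3 k with hS3
  have key : ∀ m (h : m < n),
      ((∀ u : Fin n, u ≤ ⟨m, h⟩ → A u + S2 u ⟨m, h⟩ ≤ C2 ⟨m, h⟩) ∧
        ∃ u : Fin n, u ≤ ⟨m, h⟩ ∧ C2 ⟨m, h⟩ = A u + S2 u ⟨m, h⟩) ∧
      ((∀ u v : Fin n, u ≤ v → v ≤ ⟨m, h⟩ →
          A u + S2 u v + S3 v ⟨m, h⟩ ≤ C3 ⟨m, h⟩) ∧
        ∃ u v : Fin n, u ≤ v ∧ v ≤ ⟨m, h⟩ ∧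
          C3 ⟨m, h⟩ = A u + S2 u v + S3 v ⟨m, h⟩) := by
    intro m
    induction m with
    | zero =>
      intro h
      have hfix : ∀ u : Fin n, u ≤ (⟨0, h⟩ : Fin n) → u = ⟨0, h⟩ := by
        intro u hu; exact Fin.ext (Nat.le_zero.mp hu)
      have hS2zz : S2 ⟨0, h⟩ ⟨0, h⟩ = p2 ⟨0, h⟩ := sum_pt p2 _
      have hS3zz : S3 ⟨0, h⟩ ⟨0, h⟩ = p3 ⟨0, h⟩ := sum_pt p3 _
      have hC2v : C2 ⟨0, h⟩ = A ⟨0, h⟩ + S2 ⟨0, h⟩ ⟨0, h⟩ := by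
        rw [hC2zero, hC1, hS2zz]
      have hC3v : C3 ⟨0, h⟩ = A ⟨0, h⟩ + S2 ⟨0, h⟩ ⟨0, h⟩ + S3 ⟨0, h⟩ ⟨0, h⟩ := by
        rw [hC3zero, hC2v, hS3zz]
      refine ⟨⟨?_, ⟨0, h⟩, le_refl _, hC2v⟩, ?_, ⟨0, h⟩, ⟨0, h⟩, le_refl _, le_refl _, hC3v⟩
      · intro u hu; rw [hfix u hu, hC2v]
      · intro u v huv hv
        rw [hfix v hv] at huv ⊢
        rw [hfix u huv, hC3v]
    | succ m ih =>
      intro h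
      have hm : m < n := Nat.lt_of_succ_lt h
      obtain ⟨⟨ih2a, u2, hu2, hu2e⟩, ⟨ih3a, u3, v3, huv3, hv3, hv3e⟩⟩ := ih hm
      have hrec2 : C2 ⟨m + 1, h⟩ = max (C1 ⟨m + 1, h⟩) (C2 ⟨m, hm⟩) + p2 ⟨m + 1, h⟩ :=
        hC2succ ⟨m, hm⟩ h
      have hrec3 : C3 ⟨m + 1, h⟩ = max (C2 ⟨m + 1, h⟩) (C3 ⟨m, hm⟩) + p3 ⟨m + 1, h⟩ :=
        hC3succ ⟨m, hm⟩ h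
      -- part for C2
      have h2a : ∀ u : Fin n, u ≤ ⟨m + 1, h⟩ → A u + S2 u ⟨m + 1, h⟩ ≤ C2 ⟨m + 1, h⟩ := by
        intro u hu
        rcases Nat.lt_or_ge (u : ℕ) (m + 1) with hlt | hge
        · have hu' : (u : ℕ) ≤ m := Nat.lt_succ_iff.mp hlt
          have hsp : S2 u ⟨m + 1, h⟩ = S2 u ⟨m, hm⟩ + p2 ⟨m + 1, h⟩ :=
            sum_split p2 m h u hu'
          rw [hrec2]
          calc A u + S2 u ⟨m + 1, h⟩
              = (A u + S2 u ⟨m, hm⟩) + p2 ⟨m + 1, h⟩ := by rw [hsp]; ring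
            _ ≤ C2 ⟨m, hm⟩ + p2 ⟨m + 1, h⟩ := by
                have := ih2a u (by exact hu')
                linarith
            _ ≤ max (C1 ⟨m + 1, h⟩) (C2 ⟨m, hm⟩) + p2 ⟨m + 1, h⟩ := by
                have := le_max_right (C1 ⟨m + 1, h⟩) (C2 ⟨m, hm⟩); linarith
        · have hue : u = ⟨m + 1, h⟩ := Fin.ext (le_antisymm hu hge)
          rw [hue, hrec2]
          have hS : S2 ⟨m + 1, h⟩ ⟨m + 1, h⟩ = p2 ⟨m + 1, h⟩ := sum_pt p2 _
          have hA1 : A ⟨m + 1, h⟩ = C1 ⟨m + 1, h⟩ := (hC1 _).symm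
          have := le_max_left (C1 ⟨m + 1, h⟩) (C2 ⟨m, hm⟩)
          rw [hS, hA1]
          linarith
      have h2b : ∃ u : Fin n, u ≤ ⟨m + 1, h⟩ ∧
          C2 ⟨m + 1, h⟩ = A u + S2 u ⟨m + 1, h⟩ := by
        rcases max_cases (C1 ⟨m + 1, h⟩) (C2 ⟨m, hm⟩) with ⟨hmx, _⟩ | ⟨hmx, _⟩
        · refine ⟨⟨m + 1, h⟩, le_refl _, ?_⟩
          have hS : S2 ⟨m + 1, h⟩ ⟨m + 1, h⟩ = p2 ⟨m + 1, h⟩ := sum_pt p2 _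
          have hA1 : A ⟨m + 1, h⟩ = C1 ⟨m + 1, h⟩ := (hC1 _).symm
          rw [hrec2, hmx, hS, hA1]
        · refine ⟨u2, le_trans hu2 (by simp [Fin.le_def]), ?_⟩
          have hsp : S2 u2 ⟨m + 1, h⟩ = S2 u2 ⟨m, hm⟩ + p2 ⟨m + 1, h⟩ :=
            sum_split p2 m h u2 hu2
          rw [hrec2, hmx, hu2e, hsp]
          ring
      -- part for C3
      have h3a : ∀ u v : Fin n, u ≤ v → v ≤ ⟨m + 1, h⟩ →
          A u + S2 u v + S3 v ⟨m + 1, h⟩ ≤ C3 ⟨m + 1, h⟩ := by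
        intro u v huv hv
        rcases Nat.lt_or_ge (v : ℕ) (m + 1) with hlt | hge
        · have hv' : (v : ℕ) ≤ m := Nat.lt_succ_iff.mp hlt
          have hsp : S3 v ⟨m + 1, h⟩ = S3 v ⟨m, hm⟩ + p3 ⟨m + 1, h⟩ :=
            sum_split p3 m h v hv'
          rw [hrec3]
          calc A u + S2 u v + S3 v ⟨m + 1, h⟩
              = (A u + S2 u v + S3 v ⟨m, hm⟩) + p3 ⟨m + 1, h⟩ := by rw [hsp]; ring
            _ ≤ C3 ⟨m, hm⟩ + p3 ⟨m + 1, h⟩ := by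
                have := ih3a u v huv hv'; linarith
            _ ≤ max (C2 ⟨m + 1, h⟩) (C3 ⟨m, hm⟩) + p3 ⟨m + 1, h⟩ := by
                have := le_max_right (C2 ⟨m + 1, h⟩) (C3 ⟨m, hm⟩); linarith
        · have hve : v = ⟨m + 1, h⟩ := Fin.ext (le_antisymm hv hge)
          rw [hve]
          rw [hve] at huv
          rw [hrec3]
          have hS : S3 ⟨m + 1, h⟩ ⟨m + 1, h⟩ = p3 ⟨m + 1, h⟩ := sum_pt p3 _
          have h2 := h2a u huv
          have := le_max_left (C2 ⟨m + 1, h⟩) (C3 ⟨m, hm⟩)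
          rw [hS]
          linarith
      have h3b : ∃ u v : Fin n, u ≤ v ∧ v ≤ ⟨m + 1, h⟩ ∧
          C3 ⟨m + 1, h⟩ = A u + S2 u v + S3 v ⟨m + 1, h⟩ := by
        rcases max_cases (C2 ⟨m + 1, h⟩) (C3 ⟨m, hm⟩) with ⟨hmx, _⟩ | ⟨hmx, _⟩
        · obtain ⟨u, hu, hue⟩ := h2b
          refine ⟨u, ⟨m + 1, h⟩, hu, le_refl _, ?_⟩
          have hS : S3 ⟨m + 1, h⟩ ⟨m + 1, h⟩ = p3 ⟨m + 1, h⟩ := sum_pt p3 _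
          rw [hrec3, hmx, hue, hS]
        · refine ⟨u3, v3, huv3, le_trans hv3 (by simp [Fin.le_def]), ?_⟩
          have hsp : S3 v3 ⟨m + 1, h⟩ = S3 v3 ⟨m, hm⟩ + p3 ⟨m + 1, h⟩ :=
            sum_split p3 m h v3 hv3
          rw [hrec3, hmx, hv3e, hsp]
          ring
      exact ⟨⟨h2a, h2b⟩, ⟨h3a, h3b⟩⟩
  -- conclude
  have hlast : n - 1 < n := Nat.sub_lt hn Nat.one_pos
  obtain ⟨-, h3a, u, v, huv, hv, hve⟩ := key (n - 1) hlast
  have htail : ∀ w : Fin n, S3 w ⟨n - 1, hlast⟩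
      = ∑ k ∈ Finset.univ.filter (fun k => w ≤ k), p3 k := by
    intro w
    simp only [hS3]
    congr 1
    ext k
    simp only [mem_filter, mem_univ, true_and, Fin.le_def, and_iff_left_iff_imp]
    intro _
    omega
  apply le_antisymm
  · rw [hve, htail v]
    exact le_sup' (f := fun uv : Fin n × Fin n =>
      (∑ j ∈ Finset.univ.filter (fun j => j ≤ uv.1), p1 j) +
      (∑ j ∈ Finset.univ.filter (fun j => uv.1 ≤ j ∧ j ≤ uv.2), p2 j) +
      (∑ j ∈ Finset.univ.filter (fun j => uv.2 ≤ j), p3 j))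
      (b := (u, v)) (by simp [huv])
  · apply Finset.sup'_le
    intro uv hmem
    simp only [mem_filter, mem_univ, true_and] at hmem
    have hv2 : uv.2 ≤ (⟨n - 1, hlast⟩ : Fin n) := by
      simp [Fin.le_def]; omega
    have := h3a uv.1 uv.2 hmem hv2
    rw [htail uv.2] at this
    exact this
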